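/- Let X be a profinite set given as an inverse limit X = lim←_λ X_λ of finite sets on which a profinite group G acts continuously, and suppose a dense subgroup Γ ≤ G acts on a subset X₀ ⊆ X whose image in each X_λ is all of X_λ. If Γ has finitely many orbits on X₀, then G has finitely many orbits on X, each orbit of G on X is closed and open, and each G-orbit on X contains a point of X₀. -/

import Mathlib

/-- Let `X = lim← X_l` be a profinite set with a continuous action of a profinite group `G`,
`Γ` a dense subgroup of `G` acting on a subset `X₀ ⊆ X` whose image in each finite level `X_l`
is all of `X_l`.  If `Γ` has finitely many orbits on `X₀`, then `G` has finitely many orbits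
on `X`, each `G`-orbit is clopen, and each `G`-orbit contains a point of `X₀`. -/
theorem stmt_18 (G : Type) [Group G] [TopologicalSpace G] [IsTopologicalGroup G]
    [CompactSpace G] [T2Space G] [TotallyDisconnectedSpace G]
    (X : Type) [TopologicalSpace X] [CompactSpace X] [T2Space X]
    [TotallyDisconnectedSpace X] [MulAction G X]
    (hact : Continuous fun p : G × X => p.1 • p.2)
    (Λ : Type) [Preorder Λ] [IsDirected Λ (· ≤ ·)] [Nonempty Λ]
    (Xl : Λ → Type) [∀ l, Finite (Xl l)]
    (π : ∀ l, X → Xl l)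
    (hπcont : ∀ (l : Λ) (s : Set (Xl l)), IsOpen (π l ⁻¹' s))
    (hsep : ∀ x y : X, (∀ l, π l x = π l y) → x = y)
    (t : ∀ ⦃l m : Λ⦄, l ≤ m → Xl m → Xl l)
    (hcompat : ∀ ⦃l m : Λ⦄ (h : l ≤ m) (x : X), t h (π m x) = π l x)
    (Γ : Subgroup G) (hΓ : Dense (Γ : Set G))
    (X₀ : Set X) (hX₀inv : ∀ γ ∈ Γ, ∀ x ∈ X₀, γ • x ∈ X₀)
    (hX₀surj : ∀ (l : Λ) (a : Xl l), ∃ x ∈ X₀, π l x = a)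
    (horb : ∃ F : Set X, F.Finite ∧ F ⊆ X₀ ∧ ∀ x ∈ X₀, ∃ y ∈ F, ∃ γ ∈ Γ, γ • y = x) :
    (∃ F : Set X, F.Finite ∧ F ⊆ X₀ ∧ ∀ x : X, ∃ y ∈ F, ∃ g : G, g • y = x) ∧
    ∀ x : X, IsClosed (MulAction.orbit G x : Set X) ∧ IsOpen (MulAction.orbit G x : Set X) := by
  obtain ⟨F, hFfin, hFsub, hF⟩ := horb
  -- each orbit is closed (compact image in T2 space)
  have horbclosed : ∀ x : X, IsClosed (MulAction.orbit G x : Set X) := by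
    intro x
    have hc : Continuous fun g : G => g • x :=
      hact.comp (continuous_id.prodMk continuous_const)
    exact (isCompact_range hc).isClosed
  -- the union of orbits of F
  set C : Set X := ⋃ y ∈ F, MulAction.orbit G y with hC
  have hCclosed : IsClosed C := hFfin.isClosed_biUnion fun y _ => horbclosed y
  have hX₀C : X₀ ⊆ C := by
    intro x hx
    obtain ⟨y, hyF, γ, hγ, hγy⟩ := hF x hx
    exact Set.mem_biUnion hyF ⟨γ, hγy⟩
  -- fibers of π are closed
  have hfibclosed : ∀ (l : Λ) (a : Xl l), IsClosed (π l ⁻¹' {a}) := by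
    intro l a
    rw [← isOpen_compl_iff, ← Set.preimage_compl]
    exact hπcont l _
  -- C = X, via a directed compactness argument
  have hCall : ∀ x : X, x ∈ C := by
    intro x
    set K : Λ → Set X := fun l => C ∩ π l ⁻¹' {π l x} with hK
    have hdir : Directed (· ⊇ ·) K := by
      intro l m
      obtain ⟨n, hln, hmn⟩ := directed_of (· ≤ ·) l m
      refine ⟨n, ?_, ?_⟩ <;>
      · rintro z ⟨hzC, hz⟩
        refine ⟨hzC, ?_⟩
        simp only [Set.mem_preimage, Set.mem_singleton_iff] at hz ⊢
        first
        | rw [← hcompat hln z, ← hcompat hln x, hz]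
        | rw [← hcompat hmn z, ← hcompat hmn x, hz]
    have hne : ∀ l, (K l).Nonempty := by
      intro l
      obtain ⟨z, hz₀, hz⟩ := hX₀surj l (π l x)
      exact ⟨z, hX₀C hz₀, hz⟩
    have hcl : ∀ l, IsClosed (K l) := fun l => hCclosed.inter (hfibclosed l _)
    have hcpt : ∀ l, IsCompact (K l) := fun l => (hcl l).isCompact
    obtain ⟨z, hz⟩ :=
      IsCompact.nonempty_iInter_of_directed_nonempty_isCompact_isClosed K hdir hne hcpt hcl
    have hzx : z = x := by
      apply hsep
      intro l
      have := Set.mem_iInter.mp hz l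
      exact this.2
    have hzC : z ∈ C := (Set.mem_iInter.mp hz (Classical.arbitrary Λ)).1
    rwa [hzx] at hzC
  constructor
  · refine ⟨F, hFfin, hFsub, fun x => ?_⟩
    obtain ⟨y, hyF, g, hg⟩ := Set.mem_iUnion₂.mp (hCall x)
    exact ⟨y, hyF, g, hg⟩
  · intro x
    refine ⟨horbclosed x, ?_⟩
    rw [← isClosed_compl_iff]
    have hcompl : (MulAction.orbit G x : Set X)ᶜ =
        ⋃ y ∈ {y ∈ F | x ∉ MulAction.orbit G y}, MulAction.orbit G y := by
      ext z
      simp only [Set.mem_compl_iff, Set.mem_iUnion, Set.mem_sep_iff, exists_prop]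
      constructor
      · intro hz
        obtain ⟨y, hyF, hzy⟩ := Set.mem_iUnion₂.mp (hCall z)
        refine ⟨y, ⟨hyF, fun hx => hz ?_⟩, hzy⟩
        have h1 : MulAction.orbit G x = MulAction.orbit G y := MulAction.orbit_eq_iff.mpr hx
        rw [h1]; exact hzy
      · rintro ⟨y, ⟨hyF, hxy⟩, hzy⟩ hzx
        apply hxy
        have h1 : MulAction.orbit G z = MulAction.orbit G y := MulAction.orbit_eq_iff.mpr hzy
        have h2 : MulAction.orbit G z = MulAction.orbit G x := MulAction.orbit_eq_iff.mpr hzx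
        rw [← h1, h2]; exact MulAction.mem_orbit_self x
    rw [hcompl]
    exact (hFfin.sep _).isClosed_biUnion fun y _ => horbclosed y
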